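/- For even m ≥ 6, with β_m = binom(m,2), the coefficient of q^{β_m - 2} in d_m(q) equals m²/4 - m/2. -/

import Mathlib

open Polynomial

/-- The q-derangement polynomial, defined by the recursion
`d_n(q) = (1+q+⋯+q^{n-1}) d_{n-1}(q) + (-1)^n q^{C(n,2)}` for `n ≥ 2`, with `d_1(q) = 0`. -/
noncomputable def dq : ℕ → Polynomial ℤ
  | 0 => 0
  | 1 => 0
  | (n + 2) =>
      (∑ i ∈ Finset.range (n + 2), X ^ i) * dq (n + 1)
        + (-1) ^ (n + 2) * X ^ ((n + 2).choose 2)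

/-- `A n k` is the coefficient of `q^k` in `d_n(q)`. -/
noncomputable def A (n k : ℕ) : ℤ := (dq n).coeff k

lemma key_expand (p : Polynomial ℤ) (k m : ℕ) :
    ((∑ i ∈ Finset.range k, X ^ i) * p).coeff m
      = ∑ i ∈ Finset.range k, if i ≤ m then p.coeff (m - i) else 0 := by
  rw [Finset.sum_mul, finset_sum_coeff]
  exact Finset.sum_congr rfl fun i _ => by rw [mul_comm, coeff_mul_X_pow']

lemma key (p : Polynomial ℤ) (D : ℕ) (hD : ∀ j, D < j → p.coeff j = 0)
    (s t : ℕ) (hs : s ≤ D + 1) :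
    ((∑ i ∈ Finset.range (s + t), X ^ i) * p).coeff (D + t)
      = ∑ i ∈ Finset.range s, p.coeff (D - i) := by
  induction t with
  | zero =>
    rw [key_expand]
    apply Finset.sum_congr rfl
    intro i hi
    simp only [Finset.mem_range] at hi
    rw [if_pos (by omega)]
    norm_num
  | succ t ih =>
    rw [key_expand]
    have h0 : s + (t + 1) = (s + t) + 1 := by omega
    rw [h0, Finset.sum_range_succ']
    have h1 : ∀ i ∈ Finset.range (s + t),
        (if i + 1 ≤ D + (t + 1) then p.coeff (D + (t + 1) - (i + 1)) else 0)
          = (if i ≤ D + t then p.coeff (D + t - i) else 0) := by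
      intro i _
      have : D + (t + 1) - (i + 1) = D + t - i := by omega
      rw [this]
      congr 1
      simp only [eq_iff_iff]
      omega
    rw [Finset.sum_congr rfl h1, ← key_expand, ih]
    have h2 : (if 0 ≤ D + (t + 1) then p.coeff (D + (t + 1) - 0) else 0) = 0 := by
      rw [if_pos (by omega)]
      exact hD _ (by omega)
    rw [h2, add_zero]

lemma dq_natDeg (n : ℕ) : (dq n).natDegree ≤ n.choose 2 := by
  induction n using Nat.strong_induction_on with
  | _ n ih =>
    match n with
    | 0 => simp [dq]
    | 1 => simp [dq]
    | (n + 2) =>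
      rw [dq]
      apply le_trans (natDegree_add_le _ _)
      have hc : (n + 2).choose 2 = (n + 1) + (n + 1).choose 2 := by
        rw [Nat.choose_succ_succ (n+1) 1, Nat.choose_one_right]
      apply max_le
      · apply le_trans (natDegree_mul_le)
        have h1 : (∑ i ∈ Finset.range (n + 2), (X : Polynomial ℤ) ^ i).natDegree ≤ n + 1 := by
          apply Polynomial.natDegree_sum_le_of_forall_le
          intro i hi
          simp only [Finset.mem_range] at hi
          rw [natDegree_X_pow]
          omega
        have h2 := ih (n + 1) (by omega)
        omega
      · apply le_trans (natDegree_mul_le)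
        have h3 : ((-1 : Polynomial ℤ) ^ (n + 2)).natDegree = 0 := by
          simp
        rw [h3, natDegree_X_pow]
        omega

lemma dq_coeff_zero (n j : ℕ) (h : n.choose 2 < j) : (dq n).coeff j = 0 :=
  coeff_eq_zero_of_natDegree_lt (lt_of_le_of_lt (dq_natDeg n) h)

lemma neg_one_pow_poly (m : ℕ) : ((-1 : Polynomial ℤ) ^ m) = C ((-1) ^ m) := by
  simp

/-- coefficient of the `(-1)^m X^{C(m,2)}` tail at position `C(m,2) - r`. -/
lemma tail_coeff (m c k : ℕ) : (((-1 : Polynomial ℤ)) ^ m * X ^ c).coeff k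
    = if k = c then (-1) ^ m else 0 := by
  rw [neg_one_pow_poly, coeff_C_mul, coeff_X_pow]
  split <;> simp

lemma dq_step (n r : ℕ) (hr : r ≤ (n + 1).choose 2) (hr2 : r ≤ n + 1) :
    (dq (n + 2)).coeff ((n + 2).choose 2 - r)
      = (∑ i ∈ Finset.range (r + 1), (dq (n + 1)).coeff ((n + 1).choose 2 - i))
        + (if r = 0 then (-1) ^ (n + 2) else 0) := by
  have hc : (n + 2).choose 2 = (n + 1) + (n + 1).choose 2 := by
    rw [Nat.choose_succ_succ (n+1) 1, Nat.choose_one_right]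
  rw [dq, coeff_add, tail_coeff]
  congr 1
  · have hpos : (n + 2).choose 2 - r = (n + 1).choose 2 + (n + 1 - r) := by omega
    have hsum : n + 2 = (r + 1) + (n + 1 - r) := by omega
    rw [hpos, hsum]
    exact key (dq (n + 1)) ((n + 1).choose 2) (fun j hj => dq_coeff_zero _ _ hj)
      (r + 1) (n + 1 - r) (by omega)
  · congr 1
    simp only [eq_iff_iff]
    omega

lemma dq_two : dq 2 = X := by
  rw [dq]
  simp [dq, Finset.sum_range_succ]

lemma dq_three : dq 3 = X + X ^ 2 := by
  rw [dq]
  rw [show (2:ℕ) + 1 = 3 from rfl] at *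
  rw [dq_two]
  simp [Finset.sum_range_succ]
  ring

lemma dq_top : ∀ n, 1 ≤ n → (dq n).coeff (n.choose 2) = if Even n then 1 else 0 := by
  intro n hn
  induction n, hn using Nat.le_induction with
  | base => simp [dq]
  | succ n hn ih =>
    obtain ⟨k, rfl⟩ : ∃ k, n = k + 1 := ⟨n - 1, by omega⟩
    have h := dq_step k 0 (Nat.zero_le _) (by omega)
    norm_num at h
    rw [h, ih]
    rcases Nat.even_or_odd (k + 1) with he | ho
    · have h2 : Odd (k + 1 + 1) := Even.add_one he
      rw [if_pos he, if_neg (Nat.not_even_iff_odd.2 h2), Odd.neg_one_pow h2]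
      ring
    · have h2 : Even (k + 1 + 1) := Odd.add_one ho
      rw [if_neg (Nat.not_even_iff_odd.2 ho), if_pos h2, Even.neg_one_pow h2]
      ring

lemma dq_c : ∀ n, 2 ≤ n → (dq n).coeff (n.choose 2 - 1) = ((n - 1) / 2 : ℕ) := by
  intro n hn
  induction n, hn using Nat.le_induction with
  | base => rw [dq_two]; simp
  | succ n hn ih =>
    obtain ⟨k, rfl⟩ : ∃ k, n = k + 1 := ⟨n - 1, by omega⟩
    have hch : 1 ≤ (k + 1 + 1).choose 2 := Nat.choose_pos (by omega)
    have h := dq_step k 1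
      (Nat.one_le_iff_ne_zero.2 (Nat.pos_iff_ne_zero.1 (Nat.choose_pos (by omega)))) (by omega)
    rw [show (1:ℕ) + 1 = 2 from rfl] at h
    rw [h, Finset.sum_range_succ, Finset.sum_range_one, Nat.sub_zero,
      dq_top (k + 1) (by omega), ih]
    simp only [if_neg (by omega : ¬ (1 = 0)), add_zero]
    rcases Nat.even_or_odd (k + 1) with he | ho
    · rw [if_pos he]
      rcases he with ⟨a, ha⟩
      have h1 : (k + 1 - 1) / 2 = a - 1 := by omega
      have h2 : (k + 1 + 1 - 1) / 2 = a := by omega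
      rw [h1, h2]
      have : 1 ≤ a := by omega
      push_cast [Nat.cast_sub this]
      ring
    · rw [if_neg (Nat.not_even_iff_odd.2 ho)]
      rcases ho with ⟨a, ha⟩
      have h1 : (k + 1 - 1) / 2 = a := by omega
      have h2 : (k + 1 + 1 - 1) / 2 = a := by omega
      rw [h1, h2]
      ring

lemma dq_b : ∀ n, 3 ≤ n → (dq n).coeff (n.choose 2 - 2) = ((n ^ 2 / 4 - n / 2 : ℕ)) := by
  intro n hn
  induction n, hn using Nat.le_induction with
  | base =>
    rw [dq_three]
    norm_num [coeff_add, coeff_X, coeff_X_pow]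
  | succ n hn ih =>
    obtain ⟨k, rfl⟩ : ∃ k, n = k + 1 := ⟨n - 1, by omega⟩
    have hch : (k + 1).choose 2 ≥ 2 := by
      calc (k + 1).choose 2 ≥ (3).choose 2 := Nat.choose_le_choose 2 (by omega)
      _ = 3 := rfl
      _ ≥ 2 := by omega
    have h := dq_step k 2 (by omega) (by omega)
    rw [show (2:ℕ) + 1 = 3 from rfl] at h
    rw [h, Finset.sum_range_succ, Finset.sum_range_succ, Finset.sum_range_one, Nat.sub_zero,
      dq_top (k + 1) (by omega), dq_c (k + 1) (by omega), ih]
    simp only [if_neg (by omega : ¬ (2 = 0)), add_zero]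
    rcases Nat.even_or_odd (k + 1) with he | ho
    · rw [if_pos he]
      rcases he with ⟨a, ha⟩
      have ha2 : 2 ≤ a := by omega
      have e1 : (k + 1) ^ 2 = 4 * (a * a) := by nlinarith
      have e2 : (k + 1 + 1) ^ 2 = 4 * (a * a) + 4 * a + 1 := by nlinarith
      have h1 : (k + 1 - 1) / 2 = a - 1 := by omega
      have h2 : (k + 1) ^ 2 / 4 - (k + 1) / 2 = a * a - a := by
        rw [e1]; omega
      have h3 : (k + 1 + 1) ^ 2 / 4 - (k + 1 + 1) / 2 = a * a := by
        rw [e2]; omega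
      rw [h1, h2, h3]
      have hle : a ≤ a * a := Nat.le_mul_of_pos_left a (by omega)
      push_cast [Nat.cast_sub hle, Nat.cast_sub (by omega : 1 ≤ a)]
      ring
    · rw [if_neg (Nat.not_even_iff_odd.2 ho)]
      rcases ho with ⟨a, ha⟩
      have ha2 : 1 ≤ a := by omega
      have e1 : (k + 1) ^ 2 = 4 * (a * a + a) + 1 := by nlinarith
      have e2 : (k + 1 + 1) ^ 2 = 4 * (a * a + 2 * a + 1) := by nlinarith
      have h1 : (k + 1 - 1) / 2 = a := by omega
      have h2 : (k + 1) ^ 2 / 4 - (k + 1) / 2 = a * a := by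
        rw [e1]; omega
      have h3 : (k + 1 + 1) ^ 2 / 4 - (k + 1 + 1) / 2 = a * a + a := by
        rw [e2]; omega
      rw [h1, h2, h3]
      push_cast
      ring

theorem stmt_11 (m : ℕ) (hm : 6 ≤ m) (he : Even m) :
    (A m (m.choose 2 - 2) : ℚ) = (m : ℚ) ^ 2 / 4 - (m : ℚ) / 2 := by
  rcases he with ⟨a, ha⟩
  have ha3 : 3 ≤ a := by omega
  have hb := dq_b m (by omega)
  rw [A, hb]
  have e1 : m ^ 2 = 4 * (a * a) := by nlinarith
  have h2 : m ^ 2 / 4 - m / 2 = a * a - a := by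
    rw [e1]; omega
  rw [h2]
  have hle : a ≤ a * a := Nat.le_mul_of_pos_left a (by omega)
  push_cast [Nat.cast_sub hle]
  rw [ha]
  push_cast
  ring
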